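/- Assume β > 3 and α = 1/β. Let w = x_k x_{k+1} … x_{k+m−1} ∈ L^{α,β}_m. Define y ∈ A^ℤ by y_j = x_j for k ≤ j ≤ k+m−1, y_{k+m} = g(w), and y_j = 1 for all other j. Then y ∈ Σ^{α,β}. -/

import Mathlib

open Filter Topology MeasureTheory ENNReal
open scoped Classical

noncomputable section

namespace AB

/-- The (α,β)-transformation `T(x) = βx + α − ⌊βx + α⌋`. -/
def T (α β : ℝ) (x : ℝ) : ℝ := β * x + α - ⌊β * x + α⌋

/-- `λ = ⌈α+β⌉ − 1`, as a natural number. -/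
def lamNat (α β : ℝ) : ℕ := (⌈α + β⌉ - 1).toNat

/-- The digit of `x ∈ [0,1)`: the index `k` with `x ∈ J_k`, namely `⌊βx + α⌋`. -/
def digit (α β : ℝ) (x : ℝ) : ℕ := (⌊β * x + α⌋).toNat

/-- The (α,β)-expansion of `x`. -/
def iSeq (α β : ℝ) (x : ℝ) : ℕ → ℕ := fun n => digit α β ((T α β)^[n] x)

/-- The one-sided (α,β)-shift: closure (in the product topology) of the set of expansions. -/
def Xab (α β : ℝ) : Set (ℕ → ℕ) :=
  closure {s | ∃ x ∈ Set.Ico (0 : ℝ) 1, s = iSeq α β x}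

/-- Word of given length read in a one-sided sequence starting at position `k`. -/
def wordN (s : ℕ → ℕ) (k len : ℕ) : List ℕ := (List.range len).map fun i => s (k + i)

/-- The language of the (α,β)-shift: finite words appearing in points of `Xab`. -/
def Lang (α β : ℝ) : Set (List ℕ) :=
  {w | ∃ s ∈ Xab α β, ∃ k : ℕ, w = wordN s k w.length}

/-- `a = i_{α,β}(0)`. -/
def aSeq (α β : ℝ) : ℕ → ℕ := iSeq α β 0

/-- The prefix of length `l` of a sequence, as a word. -/
def pre (s : ℕ → ℕ) (l : ℕ) : List ℕ := (List.range l).map s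

/-- Lexicographic (non-strict) order on words. -/
def wordLe (u v : List ℕ) : Prop := u = v ∨ List.Lex (· < ·) u v

/-- Lexicographic (non-strict) order on one-sided sequences. -/
def seqLe (x y : ℕ → ℕ) : Prop :=
  x = y ∨ ∃ n : ℕ, (∀ i < n, x i = y i) ∧ x n < y n

/-- The largest `k ≤ |w|` such that the length-`k` suffix of `w` equals the length-`k`
prefix of `s` (this is `k1` for `s = a` and `k2` for `s = b`). -/
def kk (s : ℕ → ℕ) (w : List ℕ) : ℕ :=
  Nat.findGreatest (fun k => w.drop (w.length - k) = pre s k) w.length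

/-- The set of finite prefixes of a sequence (`P^a`, `P^b`). -/
def Pset (s : ℕ → ℕ) : Set (List ℕ) := {u | ∃ l : ℕ, u = pre s l}

/-- The distinguished suffix `s(w)`. -/
def sWord (a b : ℕ → ℕ) (w : List ℕ) : List ℕ :=
  if kk b w < kk a w then w.drop (w.length - kk a w)
  else if kk a w < kk b w then w.drop (w.length - kk b w)
  else []

/-- The hat operation on `P = P^a ∪ P^b` (for `β > 3`, `α = 1/β`). -/
def hatP (a b : ℕ → ℕ) (lam : ℕ) (u : List ℕ) : List ℕ :=
  if u = [] then []
  else if u ∈ Pset a then u.dropLast ++ [u.getLast?.getD 0 + 1]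
  else if 3 ≤ u.getLast?.getD 0 then u.dropLast ++ [u.getLast?.getD 0 - 1]
  else
    (u.set (u.length - kk a u.dropLast - 2) (u.getD (u.length - kk a u.dropLast - 2) 0 - 1)).set
      (u.length - kk a u.dropLast - 1) (lam - 1)

/-- `ŵ` for `w = v·s(w)`: replace the distinguished suffix by its hat. -/
def hatW (a b : ℕ → ℕ) (lam : ℕ) (w : List ℕ) : List ℕ :=
  w.take (w.length - (sWord a b w).length) ++ hatP a b lam (sWord a b w)

/-- `w̃`: the hat operation applied twice. -/
def tildeW (a b : ℕ → ℕ) (lam : ℕ) (w : List ℕ) : List ℕ :=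
  hatW a b lam (hatW a b lam w)

/-- `z(u)` for `u ∈ P^b`. -/
def zP (a b : ℕ → ℕ) (u : List ℕ) : ℕ :=
  if u = [] then 0
  else sSup ({k : ℕ | (u ++ pre (fun i => a (kk a u + i)) k) ∈ Pset b} ∪ {0})

/-- `z(w)` for a word `w` in the language. -/
def zW (a b : ℕ → ℕ) (w : List ℕ) : ℕ :=
  if kk a w < kk b w then zP a b (w.drop (w.length - kk b w)) else 0

/-- `z̄(n) = max{z(u) : u prefix of b, |u| ≤ n}`. -/
def zbar (a b : ℕ → ℕ) (n : ℕ) : ℕ :=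
  (Finset.range (n + 1)).sup fun l => zP a b (pre b l)

/-- The natural extension `Σ^{α,β}`. -/
def SigmaAB (α β : ℝ) : Set (ℤ → ℕ) :=
  {x | ∀ k : ℤ, (fun n : ℕ => x (k + n)) ∈ Xab α β}

/-- `σ^j` on two-sided sequences. -/
def shiftI {A : Type*} (j : ℤ) (x : ℤ → A) : ℤ → A := fun n => x (n + j)

/-- Word of given length read in a two-sided sequence starting at position `k`. -/
def wordZ (x : ℤ → ℕ) (k : ℤ) (len : ℕ) : List ℕ := (List.range len).map fun i => x (k + i)

/-- The map `g : L^{α,β} → {0,1}`. -/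
def gW (a b : ℕ → ℕ) (w : List ℕ) : ℕ :=
  if kk a w = 0 ∧ 0 < kk b w ∧ b (kk b w) ≤ 1 then 0 else 1

/-- `w^♯`: the word `w` placed at positions `k,…,k+|w|−1`, followed by `g(w)` at
position `k+|w|`, and `1` at all other positions. -/
def wSharp (a b : ℕ → ℕ) (k : ℤ) (w : List ℕ) : ℤ → ℕ :=
  fun j => if k ≤ j ∧ j < k + w.length then w.getD (j - k).toNat 1
           else if j = k + w.length then gW a b w else 1

/-- The finite approximation sets `E^n ⊆ Σ^{α,β}`. -/
def En (α β : ℝ) (b : ℕ → ℕ) (n : ℕ) : Set (ℤ → ℕ) :=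
  {x | wordZ x (-(n : ℤ)) (2 * n + 1) ∈ Lang α β ∧
       x ((n : ℤ) + 1) = gW (aSeq α β) b (wordZ x (-(n : ℤ)) (2 * n + 1)) ∧
       ∀ j : ℤ, j < -(n : ℤ) ∨ (n : ℤ) + 1 < j → x j = 1}

/-- `s(x_k^-) = ε` for the left-infinite word `x_{(-∞,k-1]}`: no nonempty suffix of it is a
prefix of `a` or of `b`. -/
def leftStar (a b : ℕ → ℕ) (x : ℤ → ℕ) (k : ℤ) : Prop :=
  (∀ K : ℕ, 1 ≤ K → ¬ ∀ i : ℕ, i < K → x (k - K + i) = a i) ∧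
  (∀ K : ℕ, 1 ≤ K → ¬ ∀ i : ℕ, i < K → x (k - K + i) = b i)

/-- `E^n_{[k,l]}(v)`. -/
def EnCyl (α β : ℝ) (b : ℕ → ℕ) (n : ℕ) (k l : ℤ) (v : List ℕ) : Set (ℤ → ℕ) :=
  {x ∈ En α β b n | wordZ x k (l - k + 1).toNat = v}

/-- `E^{*,n}_{[k,l]}(v)`. -/
def EnCylStar (α β : ℝ) (b : ℕ → ℕ) (n : ℕ) (k l : ℤ) (v : List ℕ) : Set (ℤ → ℕ) :=
  {x ∈ EnCyl α β b n k l v | leftStar (aSeq α β) b x k}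

/-- The Birkhoff sum `∑_{j=−n}^{n} φ(σ^j x)`. -/
def birkhoff (φ : (ℤ → ℕ) → ℝ) (n : ℕ) (x : ℤ → ℕ) : ℝ :=
  ∑ j ∈ Finset.Icc (-(n : ℤ)) (n : ℤ), φ (shiftI j x)

/-- `Ξ^n_{[k,l]}(v)`. -/
def Xi (α β : ℝ) (b : ℕ → ℕ) (φ : (ℤ → ℕ) → ℝ) (n : ℕ) (k l : ℤ) (v : List ℕ) : ℝ :=
  ∑' x : (EnCyl α β b n k l v), Real.exp (birkhoff φ n x.1)

/-- `Ξ^{*,n}_{[k,l]}(v)`. -/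
def XiStar (α β : ℝ) (b : ℕ → ℕ) (φ : (ℤ → ℕ) → ℝ) (n : ℕ) (k l : ℤ) (v : List ℕ) : ℝ :=
  ∑' x : (EnCylStar α β b n k l v), Real.exp (birkhoff φ n x.1)

/-- `δ_i(f)`, as an extended nonnegative real. -/
def oscE {A : Type*} (f : (ℤ → A) → ℝ) (i : ℤ) : ℝ≥0∞ :=
  ⨆ (x : ℤ → A) (y : ℤ → A) (_ : ∀ k : ℤ, k ≠ i → x k = y k), ENNReal.ofReal |f x - f y|

/-- `‖f‖_δ` for a function on the full shift. -/
def enormFull {A : Type*} (f : (ℤ → A) → ℝ) : ℝ≥0∞ := ∑' i : ℤ, oscE f i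

/-- `‖f‖_δ` for a function on a subshift `X`: infimum over continuous extensions. -/
def enormOn {A : Type*} [TopologicalSpace A] (X : Set (ℤ → A)) (f : (ℤ → A) → ℝ) : ℝ≥0∞ :=
  ⨅ (g : (ℤ → A) → ℝ) (_ : Continuous g) (_ : ∀ x ∈ X, g x = f x), enormFull g

/-- `f` has bounded total oscillations on `X` (i.e. `f ∈ B(X)`). -/
def BTO {A : Type*} [TopologicalSpace A] (X : Set (ℤ → A)) (f : (ℤ → A) → ℝ) : Prop :=
  ContinuousOn f X ∧ enormOn X f ≠ ⊤

/-- The real value of `‖f‖_δ`. -/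
def dnorm {A : Type*} [TopologicalSpace A] (X : Set (ℤ → A)) (f : (ℤ → A) → ℝ) : ℝ :=
  (enormOn X f).toReal

/-- The pressure `p(φ)`. -/
def pressure (α β : ℝ) (b : ℕ → ℕ) (φ : (ℤ → ℕ) → ℝ) : ℝ :=
  limUnder atTop fun n : ℕ =>
    Real.log (∑' x : (En α β b n), Real.exp (birkhoff φ n x.1)) / (2 * n + 1)

/-- `ν` is a tangent functional to the pressure at `φ` (an equilibrium measure for `φ`). -/
def IsTangent (α β : ℝ) (b : ℕ → ℕ) (φ : (ℤ → ℕ) → ℝ) (ν : Measure (ℤ → ℕ)) : Prop :=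
  ∀ f : (ℤ → ℕ) → ℝ, ContinuousOn f (SigmaAB α β) →
    pressure α β b φ + ∫ x, f x ∂ν ≤ pressure α β b (fun x => φ x + f x)

/-- The cylinder `[x_1 … x_m]` in `Σ^{α,β}`. -/
def cyl (α β : ℝ) (x : ℤ → ℕ) (m : ℕ) : Set (ℤ → ℕ) :=
  {y ∈ SigmaAB α β | ∀ i : ℕ, 1 ≤ i → i ≤ m → y (i : ℤ) = x (i : ℤ)}

/-- `ν` is a weak Gibbs measure for `ψ` on `Σ^{α,β}`. -/
def WeakGibbs (α β : ℝ) (ν : Measure (ℤ → ℕ)) (ψ : (ℤ → ℕ) → ℝ) : Prop :=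
  ∀ δ : ℝ, 0 < δ → ∃ N : ℕ, ∀ m : ℕ, N ≤ m → ∀ x ∈ SigmaAB α β,
    |Real.log (ν (cyl α β x m)).toReal / m -
      (∑ l ∈ Finset.Icc (1 : ℤ) (m : ℤ), ψ (shiftI l x)) / m| ≤ δ


/-- Concatenation `w·x` of a word and a one-sided sequence. -/
def wordApp (w : List ℕ) (x : ℕ → ℕ) : ℕ → ℕ :=
  fun n => if n < w.length then w.getD n 1 else x (n - w.length)

/-- `σ^k` on one-sided sequences. -/
def shiftN (k : ℕ) (s : ℕ → ℕ) : ℕ → ℕ := fun n => s (k + n)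

end AB

namespace AB

section Dev

variable {α β : ℝ}

lemma T_eq_fract (x : ℝ) : T α β x = Int.fract (β * x + α) := rfl

lemma T_nonneg (x : ℝ) : 0 ≤ T α β x := by rw [T_eq_fract]; exact Int.fract_nonneg _

lemma T_lt_one (x : ℝ) : T α β x < 1 := by rw [T_eq_fract]; exact Int.fract_lt_one _

lemma iter_nonneg (n : ℕ) (x : ℝ) (hx0 : 0 ≤ x) : 0 ≤ (T α β)^[n] x := by
  cases n with
  | zero => simpa
  | succ m => rw [Function.iterate_succ_apply']; exact T_nonneg _

lemma iter_lt_one (n : ℕ) (x : ℝ) (hx1 : x < 1) : (T α β)^[n] x < 1 := by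
  cases n with
  | zero => simpa
  | succ m => rw [Function.iterate_succ_apply']; exact T_lt_one _

section Hyp

variable (hβ : 3 < β) (hα : α = 1 / β)

include hβ in
lemma beta_pos : 0 < β := by linarith

include hβ hα in
lemma alpha_pos : 0 < α := by rw [hα]; positivity

include hβ hα in
lemma alpha_lt_one : α < 1 := by
  rw [hα]
  rw [div_lt_one (by linarith)]
  linarith

include hβ hα in
lemma beta_alpha : β * α = 1 := by
  rw [hα]; field_simp

end Hyp

lemma digit_eq_of {x : ℝ} {j : ℕ} (h1 : (j : ℝ) ≤ β * x + α) (h2 : β * x + α < j + 1) :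
    digit α β x = j := by
  have : ⌊β * x + α⌋ = (j : ℤ) := by
    rw [Int.floor_eq_iff]
    constructor <;> push_cast <;> linarith
  simp [digit, this]

lemma digit_bounds {x : ℝ} (hpos : 0 < β * x + α) :
    (digit α β x : ℝ) ≤ β * x + α ∧ β * x + α < digit α β x + 1 := by
  have h0 : (0 : ℤ) ≤ ⌊β * x + α⌋ := Int.floor_nonneg.2 hpos.le
  have hc : ((digit α β x : ℕ) : ℝ) = ((⌊β * x + α⌋ : ℤ) : ℝ) := by
    rw [digit]; exact_mod_cast congrArg (fun z : ℤ => (z : ℝ)) (Int.toNat_of_nonneg h0)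
  constructor
  · rw [hc]; exact Int.floor_le _
  · rw [hc]; exact Int.lt_floor_add_one _

lemma T_eq_digit {x : ℝ} (hpos : 0 < β * x + α) :
    T α β x = β * x + α - digit α β x := by
  have h0 : (0 : ℤ) ≤ ⌊β * x + α⌋ := Int.floor_nonneg.2 hpos.le
  have hc : ((digit α β x : ℕ) : ℝ) = ((⌊β * x + α⌋ : ℤ) : ℝ) := by
    rw [digit]; exact_mod_cast congrArg (fun z : ℤ => (z : ℝ)) (Int.toNat_of_nonneg h0)
  rw [T, hc]

lemma iSeq_def (x : ℝ) (n : ℕ) : iSeq α β x n = digit α β ((T α β)^[n] x) := rfl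

lemma iSeq_shift (x : ℝ) (k n : ℕ) : iSeq α β ((T α β)^[k] x) n = iSeq α β x (k + n) := by
  simp [iSeq, ← Function.iterate_add_apply, Nat.add_comm k n]

/-- The orbit of `1` from the left: `e 0 = 1`, `e (m+1) = T(e m −)`. -/
def ee (α β : ℝ) : ℕ → ℝ
  | 0 => 1
  | m + 1 => β * ee α β m + α + 1 - ⌈β * ee α β m + α⌉

/-- The digit sequence of `1` from the left. -/
def bdig (α β : ℝ) (m : ℕ) : ℕ := (⌈β * ee α β m + α⌉ - 1).toNat

section Hyp2

variable (hβ : 3 < β) (hα : α = 1 / β)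

include hβ hα in
lemma ee_mem (m : ℕ) : 0 < ee α β m ∧ ee α β m ≤ 1 := by
  induction m with
  | zero => norm_num [ee]
  | succ k ih =>
    have h1 := Int.ceil_lt_add_one (β * ee α β k + α)
    have h2 := Int.le_ceil (β * ee α β k + α)
    constructor
    · simp only [ee]; linarith
    · simp only [ee]; linarith

include hβ hα in
lemma ceil_pos_ee (m : ℕ) : 1 ≤ ⌈β * ee α β m + α⌉ := by
  have h1 := (ee_mem hβ hα m).1
  have h2 := alpha_pos hβ hα
  have : (0 : ℝ) < β * ee α β m + α := by nlinarith
  exact Int.ceil_pos.2 this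

include hβ hα in
lemma bdig_cast (m : ℕ) : (bdig α β m : ℝ) = (⌈β * ee α β m + α⌉ : ℤ) - 1 := by
  have h := ceil_pos_ee hβ hα m
  rw [bdig]
  exact_mod_cast congrArg (fun z : ℤ => (z : ℝ)) (Int.toNat_of_nonneg (by omega : (0:ℤ) ≤ ⌈β * ee α β m + α⌉ - 1))

include hβ hα in
lemma ee_succ_eq (m : ℕ) : ee α β (m + 1) = β * ee α β m + α - bdig α β m := by
  rw [bdig_cast hβ hα]
  simp only [ee]
  ring

include hβ hα in
lemma floor_near_ee (m : ℕ) {y : ℝ} (h1 : ee α β m - ee α β (m + 1) / β < y)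
    (h2 : y < ee α β m) : ⌊β * y + α⌋ = ⌈β * ee α β m + α⌉ - 1 := by
  have hb0 : (0 : ℝ) < β := beta_pos hβ
  have hee := ee_mem hβ hα (m + 1)
  have hrec : ee α β (m + 1) = β * ee α β m + α + 1 - ⌈β * ee α β m + α⌉ := rfl
  rw [Int.floor_eq_iff]
  constructor
  · push_cast
    have : β * (ee α β m - ee α β (m + 1) / β) < β * y := by
      apply mul_lt_mul_of_pos_left h1 hb0
    have hX : β * (ee α β m - ee α β (m + 1) / β) = β * ee α β m - ee α β (m + 1) := by
      field_simp
    rw [hX] at this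
    linarith
  · push_cast
    have h2' : β * y < β * ee α β m := mul_lt_mul_of_pos_left h2 hb0
    have := Int.le_ceil (β * ee α β m + α)
    linarith

include hβ hα in
lemma digit_near_ee (m : ℕ) {y : ℝ} (h1 : ee α β m - ee α β (m + 1) / β < y)
    (h2 : y < ee α β m) : digit α β y = bdig α β m := by
  rw [digit, floor_near_ee hβ hα m h1 h2, bdig]

include hβ hα in
lemma tendsto_T_near (m : ℕ) :
    Tendsto (T α β) (𝓝[<] (ee α β m)) (𝓝[<] (ee α β (m + 1))) := by
  have hb0 : (0 : ℝ) < β := beta_pos hβ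
  have hee := ee_mem hβ hα (m + 1)
  have hS : Set.Ioo (ee α β m - ee α β (m + 1) / β) (ee α β m) ∈ 𝓝[<] (ee α β m) := by
    apply Ioo_mem_nhdsLT_of_mem
    constructor
    · have : 0 < ee α β (m + 1) / β := div_pos hee.1 hb0
      linarith
    · exact le_refl _
  have ev : ∀ᶠ y in 𝓝[<] (ee α β m),
      T α β y = β * y + α - ((⌈β * ee α β m + α⌉ : ℤ) - 1) := by
    filter_upwards [hS] with y hy
    rw [T, floor_near_ee hβ hα m hy.1 hy.2]
    push_cast
    ring
  rw [tendsto_nhdsWithin_iff]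
  constructor
  · apply Tendsto.congr' (ev.mono fun y hy => hy.symm)
    have hcont : Tendsto (fun y : ℝ => β * y + α - ((⌈β * ee α β m + α⌉ : ℤ) - 1))
        (𝓝 (ee α β m)) (𝓝 (β * ee α β m + α - ((⌈β * ee α β m + α⌉ : ℤ) - 1))) := by
      apply Tendsto.sub_const
      exact (tendsto_id.const_mul β).add_const α
    have heq : β * ee α β m + α - ((⌈β * ee α β m + α⌉ : ℤ) - 1) = ee α β (m + 1) := by
      simp only [ee]; push_cast; ring
    rw [heq] at hcont
    exact hcont.mono_left nhdsWithin_le_nhds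
  · filter_upwards [ev, self_mem_nhdsWithin] with y hy hy'
    rw [hy]
    have : y < ee α β m := hy'
    have heq : β * ee α β m + α - ((⌈β * ee α β m + α⌉ : ℤ) - 1) = ee α β (m + 1) := by
      simp only [ee]; push_cast; ring
    have := mul_lt_mul_of_pos_left this hb0
    simp only [Set.mem_Iio]
    linarith [heq]

include hβ hα in
lemma tendsto_iter (m : ℕ) :
    Tendsto ((T α β)^[m]) (𝓝[<] (1 : ℝ)) (𝓝[<] (ee α β m)) := by
  induction m with
  | zero => simpa [ee] using tendsto_id (x := 𝓝[<] (1:ℝ))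
  | succ k ih =>
    rw [Function.iterate_succ']
    exact (tendsto_T_near hβ hα k).comp ih

include hβ hα in
lemma b_eq_bdig {b : ℕ → ℕ} (hb : Tendsto (iSeq α β) (𝓝[<] (1 : ℝ)) (𝓝 b)) :
    b = bdig α β := by
  have hb0 : (0 : ℝ) < β := beta_pos hβ
  have h2 : Tendsto (iSeq α β) (𝓝[<] (1 : ℝ)) (𝓝 (bdig α β)) := by
    rw [tendsto_pi_nhds]
    intro m
    have hit := tendsto_iter hβ hα m
    have hlow : ∀ᶠ x in 𝓝[<] (1 : ℝ),
        ee α β m - ee α β (m + 1) / β < (T α β)^[m] x := by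
      have : Set.Ioi (ee α β m - ee α β (m + 1) / β) ∈ 𝓝 (ee α β m) := by
        apply Ioi_mem_nhds
        have hee := ee_mem hβ hα (m + 1)
        have : 0 < ee α β (m + 1) / β := div_pos hee.1 hb0
        linarith
      exact (hit.mono_right nhdsWithin_le_nhds).eventually_mem this
    have hupp : ∀ᶠ x in 𝓝[<] (1 : ℝ), (T α β)^[m] x < ee α β m := by
      have : ∀ᶠ y in 𝓝[<] (ee α β m), y ∈ Set.Iio (ee α β m) := self_mem_nhdsWithin
      exact hit.eventually this
    have hev : ∀ᶠ x in 𝓝[<] (1 : ℝ), iSeq α β x m = bdig α β m := by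
      filter_upwards [hlow, hupp] with x h1 h2
      rw [iSeq_def]
      exact digit_near_ee hβ hα m h1 h2
    exact Tendsto.congr' (hev.mono fun x h => h.symm) tendsto_const_nhds
  exact tendsto_nhds_unique hb h2

end Hyp2

section Lists

lemma pre_length (s : ℕ → ℕ) (m : ℕ) : (pre s m).length = m := by simp [pre]

lemma pre_succ (s : ℕ → ℕ) (m : ℕ) : pre s (m + 1) = pre s m ++ [s m] := by
  simp [pre, List.range_succ]

lemma getD_drop (l : List ℕ) (n i : ℕ) : (l.drop n).getD i 0 = l.getD (n + i) 0 := by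
  simp [List.getD_eq_getElem?_getD, List.getElem?_drop]

lemma pre_getD (s : ℕ → ℕ) {m i : ℕ} (h : i < m) : (pre s m).getD i 0 = s i := by
  simp [pre, List.getD_eq_getElem?_getD, List.getElem?_map, List.getElem?_range h]

lemma getD_append_lt (l₁ l₂ : List ℕ) {i : ℕ} (h : i < l₁.length) :
    (l₁ ++ l₂).getD i 0 = l₁.getD i 0 := by
  simp [List.getD_eq_getElem?_getD, List.getElem?_append_left h]

lemma getD_snoc_len (l : List ℕ) (j : ℕ) : (l ++ [j]).getD l.length 0 = j := by
  simp [List.getD_eq_getElem?_getD, List.getElem?_append_right (le_refl _)]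

lemma kk_le (s : ℕ → ℕ) (w : List ℕ) : kk s w ≤ w.length := Nat.findGreatest_le _

lemma kk_spec (s : ℕ → ℕ) (w : List ℕ) :
    w.drop (w.length - kk s w) = pre s (kk s w) :=
  Nat.findGreatest_spec (P := fun k => w.drop (w.length - k) = pre s k) (Nat.zero_le _)
    (by simp [pre])

lemma kk_ge (s : ℕ → ℕ) (w : List ℕ) {m : ℕ} (hm : m ≤ w.length)
    (h : w.drop (w.length - m) = pre s m) : m ≤ kk s w :=
  Nat.le_findGreatest hm h

lemma kk_nil (s : ℕ → ℕ) : kk s [] = 0 := rfl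

lemma match_snoc {s : ℕ → ℕ} {w : List ℕ} {j k : ℕ} (hm' : k ≤ w.length) :
    ((w ++ [j]).drop ((w ++ [j]).length - (k + 1)) = pre s (k + 1)) ↔
      (w.drop (w.length - k) = pre s k ∧ j = s k) := by
  have h1 : (w ++ [j]).length - (k + 1) = w.length - k := by
    simp only [List.length_append, List.length_singleton]; omega
  rw [h1, List.drop_append_of_le_length (Nat.sub_le _ _), pre_succ]
  constructor
  · intro h
    obtain ⟨ha, hb⟩ := List.append_inj' h (by simp)
    exact ⟨ha, by simpa using hb⟩
  · rintro ⟨ha, hb⟩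
    rw [ha, hb]

lemma match_getD {s : ℕ → ℕ} {w : List ℕ} {m : ℕ} (h : w.drop (w.length - m) = pre s m)
    (hm : m ≤ w.length) : ∀ i, i < m → w.getD (w.length - m + i) 0 = s i := by
  intro i hi
  have this2 : (w.drop (w.length - m)).getD i 0 = (pre s m).getD i 0 := by rw [h]
  rw [getD_drop, pre_getD s hi] at this2
  exact this2

lemma match_sub {s : ℕ → ℕ} {w : List ℕ} {m m' : ℕ} (h : w.drop (w.length - m) = pre s m)
    (h' : w.drop (w.length - m') = pre s m') (hmm : m ≤ m') (hm' : m' ≤ w.length) :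
    ∀ i, i < m → s (m' - m + i) = s i := by
  intro i hi
  have e1 := match_getD h (le_trans hmm hm') i hi
  have e2 := match_getD h' hm' (m' - m + i) (by omega)
  rw [← e1, ← e2]
  congr 1
  omega

end Lists

section Hyp3

variable (hβ : 3 < β) (hα : α = 1 / β)

include hβ hα in
lemma iter_zero (n : ℕ) (hn : 1 ≤ n) : (T α β)^[n] 0 = α := by
  induction n with
  | zero => omega
  | succ k ih =>
    rcases Nat.eq_zero_or_pos k with hk | hk
    · subst hk
      simp only [Nat.zero_add, Function.iterate_one]
      rw [T_eq_fract, mul_zero, zero_add]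
      exact Int.fract_eq_self.2 ⟨(alpha_pos hβ hα).le, alpha_lt_one hβ hα⟩
    · rw [Function.iterate_succ_apply', ih hk, T_eq_fract, beta_alpha hβ hα]
      rw [add_comm (1:ℝ) α, Int.fract_add_one]
      exact Int.fract_eq_self.2 ⟨(alpha_pos hβ hα).le, alpha_lt_one hβ hα⟩

include hβ hα in
lemma aSeq_eq (n : ℕ) : aSeq α β n = if n = 0 then 0 else 1 := by
  rcases Nat.eq_zero_or_pos n with h | h
  · subst h
    simp only [if_pos rfl]
    rw [aSeq, iSeq_def]
    simp only [Function.iterate_zero, id_eq]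
    apply digit_eq_of (j := 0)
    · push_cast; rw [mul_zero, zero_add]; exact (alpha_pos hβ hα).le
    · push_cast; rw [mul_zero, zero_add]; linarith [alpha_lt_one hβ hα]
  · rw [if_neg (by omega)]
    rw [aSeq, iSeq_def, iter_zero hβ hα n h]
    apply digit_eq_of (j := 1)
    · push_cast; rw [beta_alpha hβ hα]; linarith [alpha_pos hβ hα]
    · push_cast; rw [beta_alpha hβ hα]; linarith [alpha_lt_one hβ hα]

include hβ hα in
lemma ee_drop_le (n : ℕ) : ∀ m : ℕ, (∀ i, i < m → bdig α β (n + i) = bdig α β i) →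
    ee α β (n + m) ≤ ee α β m := by
  intro m
  induction m with
  | zero => intro _; exact (ee_mem hβ hα n).2
  | succ k ih =>
    intro h
    have hk := ih (fun i hi => h i (by omega))
    have hb := h k (by omega)
    have h1 : n + (k + 1) = (n + k) + 1 := by omega
    rw [h1, ee_succ_eq hβ hα (n + k), ee_succ_eq hβ hα k, hb]
    have := beta_pos hβ
    nlinarith

include hβ hα in
lemma bdig_drop_le (n m : ℕ) (h : ∀ i, i < m → bdig α β (n + i) = bdig α β i) :
    bdig α β (n + m) ≤ bdig α β m := by
  have hee := ee_drop_le hβ hα n m h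
  have hc : ⌈β * ee α β (n + m) + α⌉ ≤ ⌈β * ee α β m + α⌉ := by
    apply Int.ceil_le_ceil
    have := beta_pos hβ
    nlinarith
  rw [bdig, bdig]
  omega

end Hyp3

/-- The explicit form of `a = i_{α,β}(0)` for `α = 1/β`, `β > 3`. -/
def aF : ℕ → ℕ := fun n => if n = 0 then 0 else 1

lemma kk_snoc_pos {s : ℕ → ℕ} {w : List ℕ} {j : ℕ} (h : 0 < kk s (w ++ [j])) :
    kk s (w ++ [j]) - 1 ≤ kk s w ∧
      w.drop (w.length - (kk s (w ++ [j]) - 1)) = pre s (kk s (w ++ [j]) - 1) ∧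
      j = s (kk s (w ++ [j]) - 1) := by
  have hm : kk s (w ++ [j]) ≤ w.length + 1 := by
    have := kk_le s (w ++ [j])
    simpa using this
  obtain ⟨k, hk⟩ : ∃ k, kk s (w ++ [j]) = k + 1 := ⟨kk s (w ++ [j]) - 1, by omega⟩
  have spec := kk_spec s (w ++ [j])
  rw [hk] at spec
  rw [match_snoc (by omega)] at spec
  have hle : k ≤ kk s w := kk_ge s w (by omega) spec.1
  rw [hk]
  simpa using ⟨hle, spec.1, spec.2⟩

lemma kk_snoc_succ {s : ℕ → ℕ} {w : List ℕ} {j : ℕ} (hj : j = s (kk s w)) :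
    kk s (w ++ [j]) = kk s w + 1 := by
  apply le_antisymm
  · by_cases h0 : 0 < kk s (w ++ [j])
    · have := (kk_snoc_pos h0).1
      omega
    · omega
  · apply kk_ge
    · simp only [List.length_append, List.length_singleton]
      have := kk_le s w
      omega
    · exact (match_snoc (kk_le s w)).2 ⟨kk_spec s w, hj⟩

lemma kk_a_snoc_pos_iff {w : List ℕ} {j : ℕ} :
    0 < kk aF (w ++ [j]) ↔ (j = aF (kk aF w) ∨ j = 0) := by
  constructor
  · intro h
    obtain ⟨hle, hmatch, hj⟩ := kk_snoc_pos h
    rcases Nat.eq_zero_or_pos (kk aF (w ++ [j]) - 1) with hk | hk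
    · right
      rw [hk] at hj
      simpa [aF] using hj
    · left
      rw [hj]
      have h1 : aF (kk aF (w ++ [j]) - 1) = 1 := by simp [aF]; omega
      have h2 : aF (kk aF w) = 1 := by simp [aF]; omega
      rw [h1, h2]
  · intro h
    rcases h with hj | hj
    · have := kk_snoc_succ (s := aF) (w := w) hj
      omega
    · subst hj
      have h1 : (1 : ℕ) ≤ kk aF (w ++ [0]) := by
        apply kk_ge
        · simp
        · exact (match_snoc (w := w) (s := aF) (k := 0) (Nat.zero_le _)).2
            ⟨by simp [pre], by simp [aF]⟩
      omega

section Hyp4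

variable (hβ : 3 < β) (hα : α = 1 / β)

include hβ hα in
lemma kk_b_snoc {w : List ℕ} {j : ℕ} (hle : j ≤ bdig α β (kk (bdig α β) w)) :
    kk (bdig α β) (w ++ [j]) =
      if j = bdig α β (kk (bdig α β) w) then kk (bdig α β) w + 1 else 0 := by
  by_cases hj : j = bdig α β (kk (bdig α β) w)
  · rw [if_pos hj]
    exact kk_snoc_succ hj
  · rw [if_neg hj]
    by_contra h0
    have hpos : 0 < kk (bdig α β) (w ++ [j]) := by omega
    obtain ⟨hlek, hmatch, hjv⟩ := kk_snoc_pos hpos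
    set k := kk (bdig α β) (w ++ [j]) - 1 with hkdef
    have hsub := match_sub hmatch (kk_spec (bdig α β) w) hlek (kk_le _ _)
    have hdrop := bdig_drop_le hβ hα (kk (bdig α β) w - k) k
      (fun i hi => hsub i hi)
    rw [Nat.sub_add_cancel hlek] at hdrop
    rw [← hjv] at hdrop
    omega

/-- Left endpoint of the image of the cylinder of `w`. -/
def gmm (β : ℝ) (w : List ℕ) : ℝ := if kk aF w = 0 then 0 else 1 / β

/-- Right endpoint of the image of the cylinder of `w`. -/
def dlt (α β : ℝ) (w : List ℕ) : ℝ := ee α β (kk (bdig α β) w)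

include hβ in
lemma gmm_nonneg (w : List ℕ) : 0 ≤ gmm β w := by
  rw [gmm]
  split
  · exact le_refl _
  · positivity

include hβ in
lemma gmm_le_inv (w : List ℕ) : gmm β w ≤ 1 / β := by
  rw [gmm]
  split
  · positivity
  · exact le_refl _

include hβ hα in
lemma gmm_snoc {w : List ℕ} {j : ℕ} (hj2 : β * gmm β w + α < j + 1) :
    gmm β (w ++ [j]) = max (β * gmm β w + α - j) 0 := by
  have hb0 := beta_pos hβ
  have ha0 := alpha_pos hβ hα
  have ha1 := alpha_lt_one hβ hα
  have hba := beta_alpha hβ hα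
  by_cases hz : 0 < kk aF (w ++ [j])
  · have hor := kk_a_snoc_pos_iff.1 hz
    have hgval : gmm β (w ++ [j]) = 1 / β := if_neg (by omega)
    have hj0γ : j = 0 → kk aF w = 0 := by
      intro hj0
      by_contra hK
      have : gmm β w = 1 / β := if_neg hK
      rw [this] at hj2
      rw [mul_one_div, div_self (by linarith)] at hj2
      push_cast [hj0] at hj2
      linarith
    rcases hor with hj | hj
    · by_cases hK : kk aF w = 0
      · have hj0 : j = 0 := by rw [hK] at hj; simpa [aF] using hj
        have h0 := hj0γ hj0
        have : gmm β w = 0 := if_pos h0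
        rw [hgval, this, hj0]
        push_cast
        rw [mul_zero, zero_add, sub_zero]
        rw [max_eq_left ha0.le, hα]
      · have hj1 : j = 1 := by
          rw [hj]
          simp [aF]
          omega
        have : gmm β w = 1 / β := if_neg hK
        rw [hgval, this, hj1]
        push_cast
        rw [mul_one_div, div_self (by linarith)]
        rw [max_eq_left (by linarith), hα]
        ring
    · have h0 := hj0γ hj
      have : gmm β w = 0 := if_pos h0
      rw [hgval, this, hj]
      push_cast
      rw [mul_zero, zero_add, sub_zero, max_eq_left ha0.le, hα]
  · have hz' : kk aF (w ++ [j]) = 0 := by omega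
    have hne := mt kk_a_snoc_pos_iff.2 hz
    push_neg at hne
    obtain ⟨hne1, hne2⟩ := hne
    rw [gmm, if_pos hz']
    rw [eq_comm, max_eq_right_iff]
    by_cases hK : kk aF w = 0
    · have : gmm β w = 0 := if_pos hK
      rw [this]
      have : aF (kk aF w) = 0 := by rw [hK]; simp [aF]
      rw [this] at hne1
      have : 1 ≤ j := by omega
      have : (1 : ℝ) ≤ j := by exact_mod_cast this
      linarith
    · have : gmm β w = 1 / β := if_neg hK
      rw [this]
      have haK : aF (kk aF w) = 1 := by simp [aF]; omega
      rw [haK] at hne1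
      have : 2 ≤ j := by omega
      have : (2 : ℝ) ≤ j := by exact_mod_cast this
      rw [mul_one_div, div_self (by linarith)]
      linarith

include hβ hα in
lemma dlt_pos (w : List ℕ) : 0 < dlt α β w := (ee_mem hβ hα _).1

include hβ hα in
lemma dlt_le_one (w : List ℕ) : dlt α β w ≤ 1 := (ee_mem hβ hα _).2

include hβ hα in
lemma dlt_snoc {w : List ℕ} {j : ℕ} (hj1 : (j : ℝ) < β * dlt α β w + α) :
    dlt α β (w ++ [j]) = min (β * dlt α β w + α - j) 1 := by
  have hb0 := beta_pos hβ
  set K2 := kk (bdig α β) w with hK2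
  have hlee := ee_mem hβ hα (K2 + 1)
  have hle : j ≤ bdig α β K2 := by
    have h1 : (j : ℤ) + 1 ≤ ⌈β * ee α β K2 + α⌉ := by
      rw [Int.add_one_le_iff, Int.lt_ceil]
      exact_mod_cast hj1
    rw [bdig]
    omega
  have hrec := ee_succ_eq hβ hα K2
  rw [dlt, kk_b_snoc hβ hα hle]
  by_cases hj : j = bdig α β K2
  · rw [if_pos hj]
    have hdw : dlt α β w = ee α β K2 := rfl
    rw [hdw, hj, ← hrec]
    exact (min_eq_left hlee.2).symm
  · rw [if_neg hj]
    have hjlt : j < bdig α β K2 := by omega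
    have hjlt' : (j : ℝ) ≤ (bdig α β K2 : ℝ) - 1 := by
      have : (j : ℝ) + 1 ≤ (bdig α β K2 : ℝ) := by exact_mod_cast hjlt
      linarith
    have : dlt α β w = ee α β K2 := rfl
    rw [min_eq_right]
    · simp [ee]
    · rw [this]
      have : β * ee α β K2 + α - bdig α β K2 = ee α β (K2 + 1) := hrec.symm
      linarith [hlee.1]

include hβ hα in
lemma main_induction (w : List ℕ)
    (hw : ∃ x : ℝ, 0 ≤ x ∧ x < 1 ∧ ∀ i, i < w.length → iSeq α β x i = w.getD i 0) :
    (∀ x : ℝ, 0 ≤ x → x < 1 → (∀ i, i < w.length → iSeq α β x i = w.getD i 0) →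
        gmm β w ≤ (T α β)^[w.length] x ∧ (T α β)^[w.length] x < dlt α β w)
    ∧ (∀ t : ℝ, gmm β w ≤ t → t < dlt α β w →
        ∃ x : ℝ, 0 ≤ x ∧ x < 1 ∧ (∀ i, i < w.length → iSeq α β x i = w.getD i 0) ∧
          (T α β)^[w.length] x = t) := by
  have hb0 := beta_pos hβ
  have ha0 := alpha_pos hβ hα
  have ha1 := alpha_lt_one hβ hα
  induction w using List.reverseRecOn with
  | nil =>
    constructor
    · intro x hx0 hx1 _
      simp only [List.length_nil, Function.iterate_zero, id_eq]
      constructor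
      · simpa [gmm, kk_nil] using hx0
      · simpa [dlt, kk_nil, ee] using hx1
    · intro t ht0 ht1
      refine ⟨t, ?_, ?_, by simp, by simp⟩
      · have := gmm_nonneg hβ ([] : List ℕ)
        linarith
      · have : dlt α β ([] : List ℕ) = 1 := by simp [dlt, kk_nil, ee]
        linarith
  | append_singleton w j ih =>
    have hwlen : (w ++ [j]).length = w.length + 1 := by
      simp only [List.length_append, List.length_singleton]
    have hwd : ∀ x : ℝ, (∀ i, i < (w ++ [j]).length → iSeq α β x i = (w ++ [j]).getD i 0) →
        (∀ i, i < w.length → iSeq α β x i = w.getD i 0) := by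
      intro x hxd i hi
      have := hxd i (by omega)
      rwa [getD_append_lt _ _ hi] at this
    have hjd : ∀ x : ℝ, (∀ i, i < (w ++ [j]).length → iSeq α β x i = (w ++ [j]).getD i 0) →
        digit α β ((T α β)^[w.length] x) = j := by
      intro x hxd
      have := hxd w.length (by omega)
      rwa [getD_snoc_len] at this
    obtain ⟨x', hx0', hx1', hxd'⟩ := hw
    obtain ⟨fwd, bwd⟩ := ih ⟨x', hx0', hx1', hwd x' hxd'⟩
    -- inequalities from the realizing point
    have hy' := fwd x' hx0' hx1' (hwd x' hxd')
    have hy0' : 0 ≤ (T α β)^[w.length] x' := iter_nonneg _ _ hx0'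
    have hpos' : 0 < β * ((T α β)^[w.length] x') + α := by nlinarith
    have hbnd' := digit_bounds hpos'
    rw [hjd x' hxd'] at hbnd'
    have hj1 : (j : ℝ) < β * dlt α β w + α := by nlinarith [hy'.2, hbnd'.1]
    have hj2 : β * gmm β w + α < j + 1 := by nlinarith [hy'.1, hbnd'.2]
    have hγ := gmm_snoc hβ hα hj2
    have hδ := dlt_snoc hβ hα hj1
    constructor
    · intro x hx0 hx1 hxd
      have hyx := fwd x hx0 hx1 (hwd x hxd)
      have hy0 : 0 ≤ (T α β)^[w.length] x := iter_nonneg _ _ hx0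
      have hpos : 0 < β * ((T α β)^[w.length] x) + α := by nlinarith
      have hbnd := digit_bounds hpos
      rw [hjd x hxd] at hbnd
      have hTy : (T α β)^[(w ++ [j]).length] x =
          β * ((T α β)^[w.length] x) + α - j := by
        rw [hwlen, Function.iterate_succ_apply', T_eq_digit hpos, hjd x hxd]
      rw [hTy, hγ, hδ]
      constructor
      · apply max_le
        · nlinarith [hyx.1]
        · linarith [hbnd.1]
      · apply lt_min
        · nlinarith [hyx.2]
        · linarith [hbnd.2]
    · intro t ht1 ht2
      rw [hγ] at ht1
      rw [hδ] at ht2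
      have ht0 : 0 ≤ t := le_trans (le_max_right _ _) ht1
      have htlt1 : t < 1 := lt_of_lt_of_le ht2 (min_le_right _ _)
      set y := (t + j - α) / β with hydef
      have hyeq : β * y + α = t + j := by
        rw [hydef]
        field_simp
        ring
      have hyγ : gmm β w ≤ y := by
        have h1 : β * gmm β w + α - j ≤ t := le_trans (le_max_left _ _) ht1
        have h2 : β * gmm β w ≤ β * y := by linarith [hyeq]
        exact le_of_mul_le_mul_left h2 hb0
      have hyδ : y < dlt α β w := by
        have h1 : t < β * dlt α β w + α - j := lt_of_lt_of_le ht2 (min_le_left _ _)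
        have h2 : β * y < β * dlt α β w := by linarith [hyeq]
        exact lt_of_mul_lt_mul_left h2 hb0.le
      obtain ⟨x, hx0, hx1, hxd, hxT⟩ := bwd y hyγ hyδ
      have hy0 : 0 ≤ y := le_trans (gmm_nonneg hβ w) hyγ
      have hposy : 0 < β * y + α := by nlinarith
      have hdigy : digit α β y = j := by
        apply digit_eq_of
        · rw [hyeq]; linarith
        · rw [hyeq]; linarith
      refine ⟨x, hx0, hx1, ?_, ?_⟩
      · intro i hi
        rcases Nat.lt_or_ge i w.length with hilt | hige
        · rw [getD_append_lt _ _ hilt]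
          exact hxd i hilt
        · have hieq : i = w.length := by omega
          subst hieq
          rw [getD_snoc_len, iSeq_def, hxT, hdigy]
      · rw [hwlen, Function.iterate_succ_apply', hxT, T_eq_digit hposy, hdigy, hyeq]
        ring

include hβ hα in
lemma digit_alpha : digit α β α = 1 := by
  have ha0 := alpha_pos hβ hα
  have ha1 := alpha_lt_one hβ hα
  have hba := beta_alpha hβ hα
  apply digit_eq_of (j := 1) <;> push_cast <;> rw [hba] <;> linarith

include hβ hα in
lemma T_alpha : T α β α = α := by
  have ha0 := alpha_pos hβ hα
  have hba := beta_alpha hβ hα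
  rw [T_eq_digit (by rw [hba]; linarith), digit_alpha hβ hα, hba]
  push_cast
  ring

include hβ hα in
lemma exists_point (w : List ℕ)
    (hw : ∃ x : ℝ, 0 ≤ x ∧ x < 1 ∧ ∀ i, i < w.length → iSeq α β x i = w.getD i 0) :
    ∃ x : ℝ, 0 ≤ x ∧ x < 1 ∧ ∀ i : ℕ, iSeq α β x i =
      (if i < w.length then w.getD i 0
       else if i = w.length then gW aF (bdig α β) w else 1) := by
  have hb0 := beta_pos hβ
  have ha0 := alpha_pos hβ hα
  have ha1 := alpha_lt_one hβ hα
  have hba := beta_alpha hβ hα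
  obtain ⟨fwd, bwd⟩ := main_induction hβ hα w hw
  set g := gW aF (bdig α β) w with hg
  have hgle : g = 0 ∨ g = 1 := by rw [hg, gW]; split <;> simp
  have ht : gmm β w ≤ (g : ℝ) / β ∧ (g : ℝ) / β < dlt α β w := by
    rw [hg, gW]
    split_ifs with hc
    · simp only [Nat.cast_zero, zero_div]
      refine ⟨le_of_eq ?_, dlt_pos hβ hα w⟩
      rw [gmm, if_pos hc.1]
    · simp only [Nat.cast_one]
      refine ⟨gmm_le_inv hβ w, ?_⟩
      by_cases hK1 : kk aF w = 0
      · rcases Nat.eq_zero_or_pos (kk (bdig α β) w) with hK2 | hK2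
        · rw [dlt, hK2]
          show 1 / β < ee α β 0
          have : ee α β 0 = 1 := rfl
          rw [this, div_lt_one hb0]
          linarith
        · have h2 : ¬ bdig α β (kk (bdig α β) w) ≤ 1 := by
            intro hb1
            exact hc ⟨hK1, hK2, hb1⟩
          have h2' : 2 ≤ bdig α β (kk (bdig α β) w) := by omega
          have h3 : (3 : ℤ) ≤ ⌈β * ee α β (kk (bdig α β) w) + α⌉ := by
            rw [bdig] at h2'; omega
          have h4 : (2 : ℝ) < β * ee α β (kk (bdig α β) w) + α := by
            by_contra hcon
            push_neg at hcon
            have : ⌈β * ee α β (kk (bdig α β) w) + α⌉ ≤ 2 :=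
              Int.ceil_le.2 (by exact_mod_cast hcon)
            omega
          rw [dlt, div_lt_iff₀ hb0, mul_comm]
          linarith
      · obtain ⟨x', hx0', hx1', hxd'⟩ := hw
        have hfx := fwd x' hx0' hx1' hxd'
        have hgm : gmm β w = 1 / β := if_neg hK1
        rw [← hgm]
        exact lt_of_le_of_lt hfx.1 hfx.2
  obtain ⟨x, hx0, hx1, hxd, hxT⟩ := bwd _ ht.1 ht.2
  have harg : β * ((g : ℝ) / β) + α = g + α := by field_simp
  have hglt : (g : ℝ) ≤ 1 := by rcases hgle with h | h <;> rw [h] <;> norm_num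
  have hd : digit α β ((g : ℝ) / β) = g := by
    apply digit_eq_of <;> rw [harg]
    · linarith
    · linarith
  have hTt : T α β ((g : ℝ) / β) = α := by
    rw [T_eq_digit (by rw [harg]; positivity), hd, harg]
    ring
  have hiter : ∀ m : ℕ, (T α β)^[w.length + 1 + m] x = α := by
    intro m
    induction m with
    | zero =>
      rw [Nat.add_zero, Function.iterate_succ_apply', hxT]
      exact hTt
    | succ p ih =>
      have hh : w.length + 1 + (p + 1) = (w.length + 1 + p) + 1 := by omega
      rw [hh, Function.iterate_succ_apply', ih]
      exact T_alpha hβ hα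
  refine ⟨x, hx0, hx1, ?_⟩
  intro i
  rcases Nat.lt_trichotomy i w.length with hi | hi | hi
  · rw [if_pos hi]
    exact hxd i hi
  · rw [if_neg (by omega), if_pos hi]
    rw [iSeq_def, hi, hxT, hd]
  · rw [if_neg (by omega), if_neg (by omega)]
    obtain ⟨m, hm⟩ : ∃ m, i = w.length + 1 + m := ⟨i - (w.length + 1), by omega⟩
    rw [iSeq_def, hm, hiter m]
    exact digit_alpha hβ hα

include hβ hα in
lemma prepend {x : ℝ} (hx0 : 0 ≤ x) (hx1 : x < 1) :
    ∃ x' : ℝ, 0 ≤ x' ∧ x' < 1 ∧ T α β x' = x ∧ digit α β x' = 1 := by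
  have hb0 := beta_pos hβ
  have ha0 := alpha_pos hβ hα
  have ha1 := alpha_lt_one hβ hα
  refine ⟨(x + 1 - α) / β, div_nonneg (by linarith) hb0.le, ?_, ?_, ?_⟩
  · rw [div_lt_one hb0]; linarith
  · have harg : β * ((x + 1 - α) / β) + α = x + 1 := by field_simp; ring
    have hd : digit α β ((x + 1 - α) / β) = 1 := by
      apply digit_eq_of <;> rw [harg] <;> push_cast <;> linarith
    rw [T_eq_digit (by rw [harg]; linarith), hd, harg]
    push_cast
    ring
  · have harg : β * ((x + 1 - α) / β) + α = x + 1 := by field_simp; ring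
    apply digit_eq_of <;> rw [harg] <;> push_cast <;> linarith

include hβ hα in
lemma prepend_iter (r : ℕ) {x : ℝ} (hx0 : 0 ≤ x) (hx1 : x < 1) :
    ∃ x' : ℝ, 0 ≤ x' ∧ x' < 1 ∧ (T α β)^[r] x' = x ∧ ∀ i, i < r → iSeq α β x' i = 1 := by
  induction r with
  | zero => exact ⟨x, hx0, hx1, by simp, by omega⟩
  | succ p ih =>
    obtain ⟨xp, hxp0, hxp1, hxpT, hxpd⟩ := ih
    obtain ⟨x', hx0', hx1', hxT', hxd'⟩ := prepend hβ hα hxp0 hxp1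
    refine ⟨x', hx0', hx1', ?_, ?_⟩
    · rw [Function.iterate_succ_apply, hxT', hxpT]
    · intro i hi
      cases i with
      | zero => exact hxd'
      | succ p' =>
        rw [iSeq_def, Function.iterate_succ_apply, hxT']
        exact hxpd p' (by omega)

end Hyp4

lemma getD_one_zero (w : List ℕ) {i : ℕ} (h : i < w.length) : w.getD i 1 = w.getD i 0 := by
  rw [List.getD_eq_getElem _ _ h, List.getD_eq_getElem _ _ h]

lemma wordN_getD (s : ℕ → ℕ) (k len : ℕ) {i : ℕ} (h : i < len) :
    (wordN s k len).getD i 0 = s (k + i) := by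
  simp [wordN, List.getD_eq_getElem?_getD, List.getElem?_map, List.getElem?_range h]

lemma wSharp_eval (A B : ℕ → ℕ) (k : ℤ) (w : List ℕ) (j0 : ℤ) :
    wSharp A B k w j0 =
      if k ≤ j0 then
        (if (j0 - k).toNat < w.length then w.getD (j0 - k).toNat 1
         else if (j0 - k).toNat = w.length then gW A B w else 1)
      else 1 := by
  rw [wSharp]
  by_cases h1 : k ≤ j0
  · rw [if_pos h1]
    by_cases h2 : (j0 - k).toNat < w.length
    · rw [if_pos (show k ≤ j0 ∧ j0 < k + (w.length : ℤ) from ⟨h1, by omega⟩), if_pos h2]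
    · by_cases h3 : (j0 - k).toNat = w.length
      · rw [if_neg (show ¬(k ≤ j0 ∧ j0 < k + (w.length : ℤ)) from fun hc => by omega),
          if_pos (show j0 = k + (w.length : ℤ) by omega), if_neg h2, if_pos h3]
      · rw [if_neg (show ¬(k ≤ j0 ∧ j0 < k + (w.length : ℤ)) from fun hc => by omega),
          if_neg (show ¬ j0 = k + (w.length : ℤ) by omega), if_neg h2, if_neg h3]
  · rw [if_neg h1,
      if_neg (show ¬(k ≤ j0 ∧ j0 < k + (w.length : ℤ)) from fun hc => h1 hc.1),
      if_neg (show ¬ j0 = k + (w.length : ℤ) by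
        intro hc
        exact h1 (by omega))]

lemma realizable_of_lang {α β : ℝ} {w : List ℕ} (hw : w ∈ Lang α β) :
    ∃ x : ℝ, 0 ≤ x ∧ x < 1 ∧ ∀ i, i < w.length → iSeq α β x i = w.getD i 0 := by
  obtain ⟨s, hs, k', hwk⟩ := hw
  set N := k' + w.length with hN
  have hU : IsOpen {t : ℕ → ℕ | ∀ i ∈ Finset.range N, t i = s i} := by
    have : {t : ℕ → ℕ | ∀ i ∈ Finset.range N, t i = s i} =
        ⋂ i ∈ Finset.range N, (fun t : ℕ → ℕ => t i) ⁻¹' {s i} := by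
      ext t
      simp [Set.mem_iInter]
    rw [this]
    apply isOpen_biInter_finset
    intro i _
    exact (continuous_apply i).isOpen_preimage _ (isOpen_discrete _)
  have hsU : s ∈ {t : ℕ → ℕ | ∀ i ∈ Finset.range N, t i = s i} := fun i _ => rfl
  obtain ⟨t, htU, ht⟩ := mem_closure_iff.1 hs _ hU hsU
  obtain ⟨x, hx, rfl⟩ := ht
  refine ⟨(T α β)^[k'] x, iter_nonneg _ _ hx.1, iter_lt_one _ _ hx.2, ?_⟩
  intro i hi
  rw [iSeq_shift]
  have h1 : iSeq α β x (k' + i) = s (k' + i) := htU (k' + i) (by simp [hN]; omega)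
  rw [h1, hwk, wordN_getD s k' _ (by rw [hwk] at hi; simpa [wordN] using hi)]

end Dev

/-- extending a word of the language by `g(w)` and `1`s in both directions
gives a point of `Σ^{α,β}`. -/
theorem stmt11 (α β : ℝ) (hβ : 3 < β) (hα : α = 1 / β)
    (b : ℕ → ℕ) (hb : Tendsto (iSeq α β) (𝓝[<] (1 : ℝ)) (𝓝 b))
    (w : List ℕ) (hw : w ∈ Lang α β) (k : ℤ) :
    wSharp (aSeq α β) b k w ∈ SigmaAB α β := by
  have hbd := b_eq_bdig hβ hα hb
  subst hbd
  have haf : aSeq α β = aF := funext fun n => aSeq_eq hβ hα n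
  have hreal := realizable_of_lang hw
  obtain ⟨xs, hxs0, hxs1, hxsd⟩ := exists_point hβ hα w hreal
  have hg : gW (aSeq α β) (bdig α β) w = gW aF (bdig α β) w := by rw [haf]
  simp only [SigmaAB, Set.mem_setOf_eq]
  intro q
  rw [Xab]
  apply subset_closure
  by_cases hq : k ≤ q
  · set d := (q - k).toNat with hd
    refine ⟨(T α β)^[d] xs, ⟨iter_nonneg _ _ hxs0, iter_lt_one _ _ hxs1⟩, ?_⟩
    funext n
    show wSharp (aSeq α β) (bdig α β) k w (q + n) = iSeq α β ((T α β)^[d] xs) n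
    rw [iSeq_shift, hxsd (d + n), wSharp_eval]
    rw [if_pos (show k ≤ q + n by omega)]
    have hdn : ((q : ℤ) + n - k).toNat = d + n := by omega
    rw [hdn]
    by_cases h2 : d + n < w.length
    · rw [if_pos h2, if_pos h2, getD_one_zero w h2]
    · rw [if_neg h2, if_neg h2]
      by_cases h3 : d + n = w.length
      · rw [if_pos h3, if_pos h3, hg]
      · rw [if_neg h3, if_neg h3]
  · set r := (k - q).toNat with hr
    obtain ⟨xr, hxr0, hxr1, hxrT, hxrd⟩ := prepend_iter hβ hα r hxs0 hxs1
    refine ⟨xr, ⟨hxr0, hxr1⟩, ?_⟩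
    funext n
    show wSharp (aSeq α β) (bdig α β) k w (q + n) = iSeq α β xr n
    rw [wSharp_eval]
    by_cases hn : n < r
    · rw [if_neg (show ¬ k ≤ q + n by omega)]
      exact (hxrd n hn).symm
    · push_neg at hn
      have hshift : iSeq α β xr n = iSeq α β xs (n - r) := by
        have h1 : iSeq α β ((T α β)^[r] xr) (n - r) = iSeq α β xr (r + (n - r)) :=
          iSeq_shift xr r (n - r)
        rw [hxrT] at h1
        have h2 : iSeq α β xr n = iSeq α β xr (r + (n - r)) := by
          congr 1
          omega
        rw [h2, ← h1]
      rw [if_pos (show k ≤ q + n by omega)]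
      have hdn : ((q : ℤ) + n - k).toNat = n - r := by omega
      rw [hdn, hshift, hxsd (n - r)]
      by_cases h2 : n - r < w.length
      · rw [if_pos h2, if_pos h2, getD_one_zero w h2]
      · rw [if_neg h2, if_neg h2]
        by_cases h3 : n - r = w.length
        · rw [if_pos h3, if_pos h3, hg]
        · rw [if_neg h3, if_neg h3]

end AB
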